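/- If X and Y are normed linear spaces and the graph of F is convex on a neighbourhood of (x̄,ȳ), then q · sr_q[F](x̄,ȳ) ≤ \overline{|∂F|}_q(x̄,ȳ). -/

import Mathlib

open Filter Metric Set Topology
open scoped Classical

noncomputable section

namespace HolderPaper

/-- Extended-real quotient `a / d` of an extended real by a nonnegative real,
with the convention that division by `0` yields `⊤`. -/
def equot (a : EReal) (d : ℝ) : EReal := if d = 0 then ⊤ else a * ((d⁻¹ : ℝ) : EReal)

section MetricDefs

variable {X Y : Type*} [MetricSpace X] [MetricSpace Y]

/-- The asymmetric maximum-type distance `d_ρ((x,y),(u,v)) = max{d(x,u), ρ d(y,v)}`. -/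
def drho (ρ : ℝ) (p q : X × Y) : ℝ := max (dist p.1 q.1) (ρ * dist p.2 q.2)

/-- Positive part `f₊`. -/
def fplus (f : X × Y → EReal) (p : X × Y) : EReal := max (f p) 0

/-- Condition (P1): `f(x,y) > 0` whenever `y ≠ ybar`. -/
def P1 (f : X × Y → EReal) (ybar : Y) : Prop := ∀ p : X × Y, p.2 ≠ ybar → 0 < f p

/-- Condition (P2): `liminf_{f(x,y)↓0} f(x,y)/d(y,ybar) > 0`. -/
def P2 (f : X × Y → EReal) (ybar : Y) : Prop :=
  0 < liminf (fun p : X × Y => equot (f p) (dist p.2 ybar)) ((𝓝[>] (0 : EReal)).comap f)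

/-- The lower 0-level set `S(f) = {x | f(x,ybar) ≤ 0}`. -/
def Sf (f : X × Y → EReal) (ybar : Y) : Set X := {x | f (x, ybar) ≤ 0}

/-- The error bound modulus `Er f(xbar,ybar)`:
`liminf` of `f(x,y)/d(x,S(f))` over pairs `(x,y)` with `f(x,y) > 0` as `x → xbar`. -/
def erMod (f : X × Y → EReal) (xbar : X) (ybar : Y) : EReal :=
  liminf (fun p : X × Y => equot (f p) (infDist p.1 (Sf f ybar)))
    ((𝓝 xbar).comap Prod.fst ⊓ 𝓟 {p : X × Y | 0 < f p})

/-- `f` has an error bound w.r.t. `x` at `(xbar,ybar)` with constant `τ`. -/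
def hasErrorBound (f : X × Y → EReal) (xbar : X) (ybar : Y) (τ : ℝ) : Prop :=
  ∃ U ∈ 𝓝 xbar, ∀ x ∈ U, ∀ y : Y, ((τ * infDist x (Sf f ybar) : ℝ) : EReal) ≤ fplus f (x, y)

/-- The nonlocal ρ-slope `|∇f|◇_ρ(x,y)` (set to `⊤` if `f(x,y) = ⊤`). -/
def nslope (f : X × Y → EReal) (ρ : ℝ) (p : X × Y) : EReal :=
  if f p = ⊤ then ⊤
  else ⨆ (q : X × Y) (_ : q ≠ p), equot (max (f p - fplus f q) 0) (drho ρ p q)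

/-- The (local) ρ-slope `|∇f|_ρ(x,y)`. -/
def lslope (f : X × Y → EReal) (ρ : ℝ) (p : X × Y) : EReal :=
  limsup (fun q : X × Y => equot (max (f p - f q) 0) (drho ρ q p)) (𝓝[≠] p)

/-- The uniform strict outer slope `\overline{|∇f|}^◇(xbar,ybar)`
(`lim_{ρ↓0}` of a quantity nonincreasing in `ρ`, i.e. the supremum over `ρ > 0`). -/
def uss (f : X × Y → EReal) (xbar : X) (ybar : Y) : EReal :=
  ⨆ (ρ : ℝ) (_ : 0 < ρ),
    ⨅ (p : X × Y) (_ : dist p.1 xbar < ρ ∧ 0 < f p ∧ f p < (ρ : EReal)), nslope f ρ p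

/-- The strict outer slope `\overline{|∇f|}^{>}(xbar,ybar)`. -/
def sos (f : X × Y → EReal) (xbar : X) (ybar : Y) : EReal :=
  ⨆ (ρ : ℝ) (_ : 0 < ρ),
    ⨅ (p : X × Y) (_ : dist p.1 xbar < ρ ∧ 0 < f p ∧ f p < (ρ : EReal)), lslope f ρ p

/-- The modified strict outer slope `\overline{|∇f|}^{>+}(xbar,ybar)`. -/
def msos (f : X × Y → EReal) (xbar : X) (ybar : Y) : EReal :=
  ⨆ (ρ : ℝ) (_ : 0 < ρ),
    ⨅ (p : X × Y) (_ : dist p.1 xbar < ρ ∧ 0 < f p ∧ f p < (ρ : EReal)),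
      max (lslope f ρ p) (equot (f p) (dist p.1 xbar))

/-- Graph of a set-valued mapping. -/
def gph (F : X → Set Y) : Set (X × Y) := {p | p.2 ∈ F p.1}

/-- Inverse image `F⁻¹(ybar)`. -/
def Finv (F : X → Set Y) (ybar : Y) : Set X := {x | ybar ∈ F x}

/-- The function `f(x,y) = (d(y,ybar))^q` on `gph F`, `+∞` elsewhere. -/
def fFq (F : X → Set Y) (ybar : Y) (qq : ℝ) : X × Y → EReal :=
  fun p => if p ∈ gph F then ((dist p.2 ybar ^ qq : ℝ) : EReal) else ⊤

/-- The function `f(x,y) = ‖y - ybar‖` on `gph F`, `+∞` elsewhere (case `q = 1`). -/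
def fF1 (F : X → Set Y) (ybar : Y) : X × Y → EReal :=
  fun p => if p ∈ gph F then ((dist p.2 ybar : ℝ) : EReal) else ⊤

/-- The ρ-slope `|∇F|_ρ(x,y)` of a set-valued mapping at `(x,y) ∈ gph F`. -/
def FslopeR (F : X → Set Y) (ybar : Y) (ρ : ℝ) (p : X × Y) : EReal :=
  limsup (fun u : X × Y => equot ((max (dist p.2 ybar - dist u.2 ybar) 0 : ℝ) : EReal) (drho ρ u p))
    (𝓝[gph F \ {p}] p)

/-- The nonlocal (q,ρ)-slope `|∇F|◇_{q,ρ}(x,y)` of a set-valued mapping. -/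
def FnslopeQ (F : X → Set Y) (ybar : Y) (qq ρ : ℝ) (p : X × Y) : EReal :=
  ⨆ (u : X × Y) (_ : u ∈ gph F ∧ u ≠ p),
    equot ((max (dist p.2 ybar ^ qq - dist u.2 ybar ^ qq) 0 : ℝ) : EReal) (drho ρ u p)

/-- The uniform strict q-slope `\overline{|∇F|}^◇_q(xbar,ybar)`. -/
def ussFq (F : X → Set Y) (xbar : X) (ybar : Y) (qq : ℝ) : EReal :=
  ⨆ (ρ : ℝ) (_ : 0 < ρ),
    ⨅ (p : X × Y)
      (_ : p ∈ gph F ∧ dist p.1 xbar < ρ ∧ dist p.2 ybar < ρ ∧ p.1 ∉ Finv F ybar),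
      FnslopeQ F ybar qq ρ p

/-- The strict q-slope `\overline{|∇F|}_q(xbar,ybar)`. -/
def sosFq (F : X → Set Y) (xbar : X) (ybar : Y) (qq : ℝ) : EReal :=
  (qq : EReal) *
    ⨆ (ρ : ℝ) (_ : 0 < ρ),
      ⨅ (p : X × Y)
        (_ : p ∈ gph F ∧ dist p.1 xbar < ρ ∧ dist p.2 ybar < ρ ∧ p.1 ∉ Finv F ybar),
        ((dist p.2 ybar ^ (qq - 1) : ℝ) : EReal) * FslopeR F ybar ρ p

/-- The modified strict q-slope `\overline{|∇F|}^{+}_q(xbar,ybar)`. -/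
def msosFq (F : X → Set Y) (xbar : X) (ybar : Y) (qq : ℝ) : EReal :=
  ⨆ (ρ : ℝ) (_ : 0 < ρ),
    ⨅ (p : X × Y)
      (_ : p ∈ gph F ∧ dist p.1 xbar < ρ ∧ dist p.2 ybar < ρ ∧ p.1 ∉ Finv F ybar),
      max (((qq * dist p.2 ybar ^ (qq - 1) : ℝ) : EReal) * FslopeR F ybar ρ p)
        (equot ((dist p.2 ybar ^ qq : ℝ) : EReal) (dist p.1 xbar))

/-- The Hölder subregularity modulus of order `q`:
`liminf_{x→xbar, x∉F⁻¹(ybar)} (d(ybar,F(x)))^q / d(x,F⁻¹(ybar))`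
(with `d(ybar,∅) = +∞`). -/
def srq (F : X → Set Y) (xbar : X) (ybar : Y) (qq : ℝ) : EReal :=
  liminf
    (fun x : X =>
      equot (if F x = ∅ then ⊤ else ((infDist ybar (F x) ^ qq : ℝ) : EReal))
        (infDist x (Finv F ybar)))
    (𝓝[(Finv F ybar)ᶜ] xbar)

end MetricDefs

section NormedDefs

variable {X Y : Type*} [NormedAddCommGroup X] [NormedSpace ℝ X]
  [NormedAddCommGroup Y] [NormedSpace ℝ Y]

/-- The Fréchet subdifferential of `f : X × Y → ℝ∪{+∞}` at `p`, as a set of pairs of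
continuous linear functionals (empty when `f p = ⊤`). -/
def fsubdiff (f : X × Y → EReal) (p : X × Y) : Set ((X →L[ℝ] ℝ) × (Y →L[ℝ] ℝ)) :=
  {φ | f p ≠ ⊤ ∧ 0 ≤ liminf
      (fun q : X × Y =>
        equot (f q - f p - ((φ.1 (q.1 - p.1) + φ.2 (q.2 - p.2) : ℝ) : EReal)) (dist q p))
      (𝓝[≠] p)}

/-- The subdifferential ρ-slope `|∂f|_ρ(x,y)`. -/
def sdslope (f : X × Y → EReal) (ρ : ℝ) (p : X × Y) : EReal :=
  ⨅ (φ : (X →L[ℝ] ℝ) × (Y →L[ℝ] ℝ)) (_ : φ ∈ fsubdiff f p ∧ ‖φ.2‖ < ρ), (‖φ.1‖ : EReal)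

/-- The strict outer subdifferential slope `\overline{|∂f|}^{>}(xbar,ybar)`. -/
def ssds (f : X × Y → EReal) (xbar : X) (ybar : Y) : EReal :=
  ⨆ (ρ : ℝ) (_ : 0 < ρ),
    ⨅ (p : X × Y) (_ : dist p.1 xbar < ρ ∧ 0 < f p ∧ f p < (ρ : EReal)), sdslope f ρ p

/-- The modified strict outer subdifferential slope `\overline{|∂f|}^{>+}(xbar,ybar)`. -/
def mssds (f : X × Y → EReal) (xbar : X) (ybar : Y) : EReal :=
  ⨆ (ρ : ℝ) (_ : 0 < ρ),
    ⨅ (p : X × Y) (_ : dist p.1 xbar < ρ ∧ 0 < f p ∧ f p < (ρ : EReal)),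
      max (sdslope f ρ p) (equot (f p) (dist p.1 xbar))

/-- `f` is convex on the set `U` (with extended-real values). -/
def convexOnE (U : Set (X × Y)) (f : X × Y → EReal) : Prop :=
  Convex ℝ U ∧ ∀ p ∈ U, ∀ q ∈ U, ∀ t : ℝ, 0 ≤ t → t ≤ 1 →
    f (t • p + (1 - t) • q) ≤ (t : EReal) * f p + ((1 - t : ℝ) : EReal) * f q

/-- The Fréchet normal cone to `Ω ⊂ X × Y` at `p ∈ Ω`. -/
def ncone (Ω : Set (X × Y)) (p : X × Y) : Set ((X →L[ℝ] ℝ) × (Y →L[ℝ] ℝ)) :=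
  {φ | limsup
      (fun q : X × Y =>
        equot (((φ.1 (q.1 - p.1) + φ.2 (q.2 - p.2) : ℝ)) : EReal) (dist q p))
      (𝓝[Ω \ {p}] p) ≤ 0}

/-- The Fréchet coderivative `D*F(x,y)(y*)`. -/
def coderiv (F : X → Set Y) (p : X × Y) (ys : Y →L[ℝ] ℝ) : Set (X →L[ℝ] ℝ) :=
  {xs | (xs, -ys) ∈ ncone (gph F) p}

/-- The (normalized) duality mapping `J(y) = {y* : ‖y*‖ = 1, ⟨y*,y⟩ = ‖y‖}`. -/
def Jdual (y : Y) : Set (Y →L[ℝ] ℝ) := {ys | ‖ys‖ = 1 ∧ ys y = ‖y‖}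

/-- The subdifferential ρ-slope of `F` at `(x,y) ∈ gph F`:
`inf{‖x*‖ : x* ∈ D*F(x,y)(J(y-ybar) + ρ𝔹*)}`. -/
def FsdSlope (F : X → Set Y) (ybar : Y) (ρ : ℝ) (p : X × Y) : EReal :=
  ⨅ (xs : X →L[ℝ] ℝ)
    (_ : ∃ ws : Y →L[ℝ] ℝ, (∃ ys ∈ Jdual (p.2 - ybar), ‖ws - ys‖ ≤ ρ) ∧ xs ∈ coderiv F p ws),
    (‖xs‖ : EReal)

/-- `ξ_q(y) = ‖y - ybar‖^{1-q}/q`. -/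
def xiq (qq : ℝ) (ybar y : Y) : ℝ := ‖y - ybar‖ ^ (1 - qq) / qq

/-- The strict subdifferential q-slope `\overline{|∂F|}_q(xbar,ybar)`. -/
def ssdFq (F : X → Set Y) (xbar : X) (ybar : Y) (qq : ℝ) : EReal :=
  (qq : EReal) *
    ⨆ (ρ : ℝ) (_ : 0 < ρ),
      ⨅ (p : X × Y)
        (_ : p ∈ gph F ∧ ‖p.1 - xbar‖ < ρ ∧ ‖p.2 - ybar‖ < ρ ∧ p.1 ∉ Finv F ybar),
        ((‖p.2 - ybar‖ ^ (qq - 1) : ℝ) : EReal) * FsdSlope F ybar (xiq qq ybar p.2 * ρ) p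

/-- The modified strict subdifferential q-slope `\overline{|∂F|}^{+}_q(xbar,ybar)`. -/
def msdFq (F : X → Set Y) (xbar : X) (ybar : Y) (qq : ℝ) : EReal :=
  ⨆ (ρ : ℝ) (_ : 0 < ρ),
    ⨅ (p : X × Y)
      (_ : p ∈ gph F ∧ ‖p.1 - xbar‖ < ρ ∧ ‖p.2 - ybar‖ < ρ ∧ p.1 ∉ Finv F ybar),
      max (((qq * ‖p.2 - ybar‖ ^ (qq - 1) : ℝ) : EReal) * FsdSlope F ybar (xiq qq ybar p.2 * ρ) p)
        (equot ((‖p.2 - ybar‖ ^ qq : ℝ) : EReal) ‖p.1 - xbar‖)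

/-- The normalized ε-enlargement `J^q_ε(y)` of the q-duality mapping
`J^q(y) = q‖y‖^{q-1} J(y)`. -/
def JqEps (qq ε : ℝ) (y : Y) : Set (Y →L[ℝ] ℝ) :=
  {ws | ∃ us ∈ Jdual y, ∃ vs : Y →L[ℝ] ℝ, ‖vs‖ ≤ 1 ∧
    (qq * ‖y‖ ^ (qq - 1)) • us + ε • vs ≠ 0 ∧
    ws = ‖(qq * ‖y‖ ^ (qq - 1)) • us + ε • vs‖⁻¹ • ((qq * ‖y‖ ^ (qq - 1)) • us + ε • vs)}

/-- The constant `β` of Li and Mordukhovich. -/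
def betaLM (F : X → Set Y) (xbar : X) (ybar : Y) (qq : ℝ) : EReal :=
  ⨆ (ε : ℝ) (_ : 0 < ε),
    ⨅ (p : X × Y) (xs : X →L[ℝ] ℝ)
      (_ : p ∈ gph F ∧ p.1 ∉ Finv F ybar ∧ ‖p.1 - xbar‖ < ε ∧
           ‖p.2 - ybar‖ < min ε (‖p.1 - xbar‖ ^ (1 / 2 : ℝ)) ∧
           ∃ ws ∈ JqEps qq ε (p.2 - ybar), xs ∈ coderiv F p ws),
      ((qq * ‖xs‖ * ‖p.2 - ybar‖ ^ (qq - 1) : ℝ) : EReal)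

end NormedDefs

end HolderPaper

namespace HolderPaper


private lemma key_ncone {X Y : Type*} [NormedAddCommGroup X] [NormedSpace ℝ X]
    [NormedAddCommGroup Y] [NormedSpace ℝ Y]
    {F : X → Set Y} {U : Set (X × Y)} (hU : Convex ℝ (gph F ∩ U))
    {p r : X × Y} (hp : p ∈ gph F ∩ U) (hr : r ∈ gph F ∩ U) (hrp : r ≠ p)
    {xs : X →L[ℝ] ℝ} {ws : Y →L[ℝ] ℝ}
    (h : (xs, ws) ∈ ncone (gph F) p) :
    xs (r.1 - p.1) + ws (r.2 - p.2) ≤ 0 := by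
  by_contra hL'
  push_neg at hL'
  simp only [ncone, Set.mem_setOf_eq] at h
  have hD : (0:ℝ) < dist r p := dist_pos.2 hrp
  set L : ℝ := xs (r.1 - p.1) + ws (r.2 - p.2) with hLdef
  have hc0pos : (0:ℝ) < L / dist r p := div_pos hL' hD
  have hlt : Filter.limsup
      (fun q : X × Y =>
        equot ((((xs, ws).1 (q.1 - p.1) + (xs, ws).2 (q.2 - p.2) : ℝ)) : EReal) (dist q p))
      (𝓝[gph F \ {p}] p) < ((L / dist r p : ℝ) : EReal) :=
    lt_of_le_of_lt h (by exact_mod_cast hc0pos)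
  have hev := Filter.eventually_lt_of_limsup_lt hlt
  rw [Filter.eventually_iff, mem_nhdsWithin] at hev
  obtain ⟨V, hVopen, hpV, hVsub⟩ := hev
  obtain ⟨η, hη, hball⟩ := Metric.isOpen_iff.1 hVopen p hpV
  set t : ℝ := min 1 (η / (2 * dist r p)) with htdef
  have ht0 : 0 < t := lt_min one_pos (div_pos hη (by positivity))
  have ht1 : t ≤ 1 := min_le_left _ _
  set qt : X × Y := (1 - t) • p + t • r with hqtdef
  have hqtmem : qt ∈ gph F ∩ U := hU hp hr (by linarith) ht0.le (by ring)
  have hsub : qt - p = t • (r - p) := by rw [hqtdef]; module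
  have hqtp : qt ≠ p := by
    intro hEq
    have h0 : t • (r - p) = 0 := by rw [← hsub, hEq, sub_self]
    rcases smul_eq_zero.1 h0 with h' | h'
    · exact ht0.ne' h'
    · exact hrp (sub_eq_zero.1 h')
  have hdist : dist qt p = t * dist r p := by
    rw [dist_eq_norm, hsub, norm_smul, Real.norm_eq_abs, abs_of_pos ht0, ← dist_eq_norm]
  have hmem : qt ∈ V ∩ (gph F \ {p}) := by
    refine ⟨hball ?_, hqtmem.1, hqtp⟩
    rw [Metric.mem_ball, hdist]
    have h2 : t ≤ η / (2 * dist r p) := min_le_right _ _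
    calc t * dist r p ≤ (η / (2 * dist r p)) * dist r p :=
          mul_le_mul_of_nonneg_right h2 hD.le
      _ = η / 2 := by field_simp
      _ < η := by linarith
  have hval := hVsub hmem
  rw [Set.mem_setOf_eq] at hval
  have h1 : qt.1 - p.1 = t • (r.1 - p.1) := by
    have := congrArg Prod.fst hsub
    simpa using this
  have h2 : qt.2 - p.2 = t • (r.2 - p.2) := by
    have := congrArg Prod.snd hsub
    simpa using this
  have hnum : ((xs, ws).1 (qt.1 - p.1) + (xs, ws).2 (qt.2 - p.2) : ℝ) = t * L := by
    simp only [h1, h2, map_smul, smul_eq_mul]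
    rw [hLdef]; ring
  have htD : t * dist r p ≠ 0 := by positivity
  rw [hnum, hdist] at hval
  have heq : equot ((t * L : ℝ) : EReal) (t * dist r p) = ((L / dist r p : ℝ) : EReal) := by
    rw [equot, if_neg htD, ← EReal.coe_mul]
    congr 1
    field_simp
  rw [heq] at hval
  exact lt_irrefl _ hval


set_option maxHeartbeats 2000000 in
/-- in normed spaces, if `gph F` is convex near `(xbar,ybar)`, then
`q · sr_q[F](xbar,ybar) ≤ \overline{|∂F|}_q(xbar,ybar)`. -/
theorem statement18 {X Y : Type*} [NormedAddCommGroup X] [NormedSpace ℝ X] [NormedAddCommGroup Y] [NormedSpace ℝ Y]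
    (F : X → Set Y) (xbar : X) (ybar : Y) (hbar : (xbar, ybar) ∈ gph F)
    (qq : ℝ) (hq0 : 0 < qq) (hq1 : qq ≤ 1)
    (hconv : ∃ U ∈ 𝓝 (xbar, ybar), Convex ℝ (gph F ∩ U)) :
    (qq : EReal) * srq F xbar ybar qq ≤ ssdFq F xbar ybar qq := by
  obtain ⟨U, hUmem, hUconv⟩ := hconv
  obtain ⟨r₀, hr₀, hballU⟩ := Metric.mem_nhds_iff.1 hUmem
  simp only [ssdFq]
  set S : EReal := ⨆ (ρ : ℝ) (_ : 0 < ρ),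
      ⨅ (p : X × Y)
        (_ : p ∈ gph F ∧ ‖p.1 - xbar‖ < ρ ∧ ‖p.2 - ybar‖ < ρ ∧ p.1 ∉ Finv F ybar),
        ((‖p.2 - ybar‖ ^ (qq - 1) : ℝ) : EReal) * FsdSlope F ybar (xiq qq ybar p.2 * ρ) p
    with hSdef
  have hS0 : (0:EReal) ≤ S := by
    have h1 : (0:EReal) ≤ ⨅ (p : X × Y)
        (_ : p ∈ gph F ∧ ‖p.1 - xbar‖ < 1 ∧ ‖p.2 - ybar‖ < 1 ∧ p.1 ∉ Finv F ybar),
        ((‖p.2 - ybar‖ ^ (qq - 1) : ℝ) : EReal) * FsdSlope F ybar (xiq qq ybar p.2 * 1) p := by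
      refine le_iInf fun p => le_iInf fun _ => ?_
      refine mul_nonneg (by exact_mod_cast Real.rpow_nonneg (norm_nonneg _) _) ?_
      refine le_iInf fun xs => le_iInf fun _ => ?_
      exact_mod_cast norm_nonneg xs
    exact le_trans h1 (le_iSup₂ (f := fun (ρ : ℝ) (_ : 0 < ρ) => ⨅ (p : X × Y)
        (_ : p ∈ gph F ∧ ‖p.1 - xbar‖ < ρ ∧ ‖p.2 - ybar‖ < ρ ∧ p.1 ∉ Finv F ybar),
        ((‖p.2 - ybar‖ ^ (qq - 1) : ℝ) : EReal) * FsdSlope F ybar (xiq qq ybar p.2 * ρ) p)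
      1 one_pos)
  have key : ∀ c c' : ℝ, 0 < c' → c' < c → (c : EReal) < srq F xbar ybar qq →
      (c' : EReal) ≤ S := by
    intro c c' hc'0 hcc hcsr
    have hc0 : (0:ℝ) < c := lt_trans hc'0 hcc
    set ε : ℝ := 1 - c' / c with hεdef
    have hε0 : 0 < ε := by
      have := (div_lt_one hc0).2 hcc
      rw [hεdef]; linarith
    have hε1 : (1 - ε) * c = c' := by
      rw [hεdef]; field_simp; ring
    have hε1' : 0 < 1 - ε := by
      rw [hεdef]
      have : 0 < c' / c := div_pos hc'0 hc0
      linarith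
    simp only [srq] at hcsr
    have hev := Filter.eventually_lt_of_lt_liminf hcsr
    rw [Filter.eventually_iff, mem_nhdsWithin] at hev
    obtain ⟨W, hWopen, hxW, hWsub⟩ := hev
    obtain ⟨δ, hδ, hballW⟩ := Metric.isOpen_iff.1 hWopen xbar hxW
    set ρ : ℝ := min δ (min 1 (min (qq * ε) (r₀ / 4))) with hρdef
    have hρ0 : 0 < ρ :=
      lt_min hδ (lt_min one_pos (lt_min (by positivity) (by positivity)))
    have hρδ : ρ ≤ δ := min_le_left _ _
    have hρ1 : ρ ≤ 1 := le_trans (min_le_right _ _) (min_le_left _ _)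
    have hρqe : ρ ≤ qq * ε :=
      le_trans (min_le_right _ _) (le_trans (min_le_right _ _) (min_le_left _ _))
    have hρr : ρ ≤ r₀ / 4 :=
      le_trans (min_le_right _ _) (le_trans (min_le_right _ _) (min_le_right _ _))
    refine le_trans ?_ (le_iSup₂ (f := fun (ρ : ℝ) (_ : 0 < ρ) => ⨅ (p : X × Y)
        (_ : p ∈ gph F ∧ ‖p.1 - xbar‖ < ρ ∧ ‖p.2 - ybar‖ < ρ ∧ p.1 ∉ Finv F ybar),
        ((‖p.2 - ybar‖ ^ (qq - 1) : ℝ) : EReal) * FsdSlope F ybar (xiq qq ybar p.2 * ρ) p)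
      ρ hρ0)
    refine le_iInf fun p => le_iInf fun hp => ?_
    obtain ⟨hpg, hpx, hpy, hpninv⟩ := hp
    obtain ⟨x, y⟩ := p
    simp only at hpx hpy hpg hpninv ⊢
    have hxg : y ∈ F x := hpg
    have hyy : y ≠ ybar := by
      intro hEq
      exact hpninv (by rw [← hEq]; exact hxg)
    set n : ℝ := ‖y - ybar‖ with hndef
    have hn : 0 < n := by
      rw [hndef]
      exact norm_sub_pos_iff.2 hyy
    set a : ℝ := n ^ (qq - 1) with hadef
    have ha : 0 < a := Real.rpow_pos_of_pos hn _
    set d : ℝ := infDist x (Finv F ybar) with hddef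
    have hxbarinv : xbar ∈ Finv F ybar := hbar
    have hdρ : d < ρ := by
      have h1 : d ≤ dist x xbar := Metric.infDist_le_dist_of_mem hxbarinv
      rw [dist_eq_norm] at h1
      exact lt_of_le_of_lt h1 hpx
    have hd0' : 0 ≤ d := Metric.infDist_nonneg
    have hxiq : xiq qq ybar y * ρ ≤ ε := by
      have hb1 : ‖y - ybar‖ ≤ 1 := le_trans hpy.le hρ1
      have h1 : ‖y - ybar‖ ^ (1 - qq) ≤ 1 :=
        Real.rpow_le_one (norm_nonneg _) hb1 (by linarith)
      have h2 : xiq qq ybar y ≤ 1 / qq := by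
        rw [xiq]
        exact (div_le_div_iff_of_pos_right hq0).2 h1
      calc xiq qq ybar y * ρ ≤ (1 / qq) * ρ :=
            mul_le_mul_of_nonneg_right h2 hρ0.le
        _ ≤ (1 / qq) * (qq * ε) := by
            apply mul_le_mul_of_nonneg_left hρqe
            positivity
        _ = ε := by field_simp
    have hxiq0 : 0 ≤ xiq qq ybar y * ρ := by
      apply mul_nonneg _ hρ0.le
      rw [xiq]
      positivity
    -- the main estimate for each xs in the coderivative set
    have hI : ((c' / a : ℝ) : EReal) ≤ FsdSlope F ybar (xiq qq ybar y * ρ) (x, y) := by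
      rw [FsdSlope]
      refine le_iInf fun xs => le_iInf fun hxs => ?_
      obtain ⟨ws, ⟨ys, hysJ, hws⟩, hcod⟩ := hxs
      rw [EReal.coe_le_coe_iff]
      -- the key inequality (1-ε) n ≤ ‖xs‖ d
      have hxd : (1 - ε) * n ≤ ‖xs‖ * d := by
        refine le_of_forall_pos_le_add fun η hη => ?_
        set δ' : ℝ := min (ρ / 2) (η / (‖xs‖ + 1)) with hδ'def
        have hδ'0 : 0 < δ' := lt_min (by positivity) (by positivity)
        have hδ'ρ : δ' ≤ ρ / 2 := min_le_left _ _
        have hne : (Finv F ybar).Nonempty := ⟨xbar, hxbarinv⟩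
        obtain ⟨u, huF, hud⟩ := (Metric.infDist_lt_iff hne).1
          (show infDist x (Finv F ybar) < d + δ' by rw [← hddef]; linarith)
        have hu3 : dist u xbar < 3 * ρ := by
          have h1 : dist u xbar ≤ dist u x + dist x xbar := dist_triangle _ _ _
          have h2 : dist u x < d + δ' := by rw [dist_comm]; exact hud
          have h3 : dist x xbar < ρ := by rw [dist_eq_norm]; exact hpx
          linarith
        have hpU : (x, y) ∈ U := by
          apply hballU
          rw [Metric.mem_ball, Prod.dist_eq]
          apply max_lt
          · rw [dist_eq_norm]; linarith
          · rw [dist_eq_norm]; linarith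
        have hrU : (u, ybar) ∈ U := by
          apply hballU
          rw [Metric.mem_ball, Prod.dist_eq]
          apply max_lt
          · linarith
          · simpa using hr₀
        have hrg : (u, ybar) ∈ gph F := huF
        have hrp : ((u, ybar) : X × Y) ≠ (x, y) := by
          intro hEq
          exact hyy ((congrArg Prod.snd hEq).symm)
        have hcone := key_ncone hUconv ⟨hpg, hpU⟩ ⟨hrg, hrU⟩ hrp hcod
        simp only at hcone
        -- hcone : xs (u - x) + (-ws) (ybar - y) ≤ 0
        have hneg : ((-ws) (ybar - y) : ℝ) = ws (y - ybar) := by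
          rw [show ybar - y = -(y - ybar) from (neg_sub y ybar).symm]
          simp
        rw [hneg] at hcone
        have hysv : ys (y - ybar) = n := hysJ.2
        have habs : |(ws - ys) (y - ybar)| ≤ ε * n := by
          have h1 : |(ws - ys) (y - ybar)| ≤ ‖ws - ys‖ * ‖y - ybar‖ := by
            have := (ws - ys).le_opNorm (y - ybar)
            rwa [Real.norm_eq_abs] at this
          have h2 : ‖ws - ys‖ * ‖y - ybar‖ ≤ (xiq qq ybar y * ρ) * n := by
            apply mul_le_mul_of_nonneg_right hws (norm_nonneg _)
          have h3 : (xiq qq ybar y * ρ) * n ≤ ε * n :=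
            mul_le_mul_of_nonneg_right hxiq hn.le
          linarith
        have hwsv : (1 - ε) * n ≤ ws (y - ybar) := by
          have h1 : ws (y - ybar) = ys (y - ybar) + (ws - ys) (y - ybar) := by
            simp
          have h2 : -(ε * n) ≤ (ws - ys) (y - ybar) := neg_le_of_abs_le habs
          rw [h1, hysv]
          linarith
        have hxsu : (1 - ε) * n ≤ xs (x - u) := by
          have h1 : xs (x - u) = -(xs (u - x)) := by
            rw [show x - u = -(u - x) from (neg_sub u x).symm]; simp
          rw [h1]
          linarith
        have hxsn : xs (x - u) ≤ ‖xs‖ * (d + δ') := by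
          have h1 : xs (x - u) ≤ |xs (x - u)| := le_abs_self _
          have h2 : |xs (x - u)| ≤ ‖xs‖ * ‖x - u‖ := by
            have := xs.le_opNorm (x - u)
            rwa [Real.norm_eq_abs] at this
          have h3 : ‖x - u‖ ≤ d + δ' := by
            rw [← dist_eq_norm]
            exact hud.le
          nlinarith [norm_nonneg xs]
        have h4 : ‖xs‖ * δ' ≤ η := by
          have h5 : δ' ≤ η / (‖xs‖ + 1) := min_le_right _ _
          have h6 : ‖xs‖ * δ' ≤ ‖xs‖ * (η / (‖xs‖ + 1)) :=
            mul_le_mul_of_nonneg_left h5 (norm_nonneg _)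
          have h7 : ‖xs‖ * (η / (‖xs‖ + 1)) ≤ η := by
            rw [mul_div_assoc']
            rw [div_le_iff₀ (by positivity)]
            nlinarith [norm_nonneg xs]
          linarith
        nlinarith
      -- d must be positive
      have hd0 : 0 < d := by
        rcases lt_or_eq_of_le hd0' with h | h
        · exact h
        · exfalso
          rw [← h] at hxd
          nlinarith
      -- the liminf bound at x
      have hgx : (c : EReal) < equot
          (if F x = ∅ then ⊤ else ((infDist ybar (F x) ^ qq : ℝ) : EReal))
          (infDist x (Finv F ybar)) := by
        have hxm : x ∈ W ∩ (Finv F ybar)ᶜ := by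
          refine ⟨hballW ?_, hpninv⟩
          rw [Metric.mem_ball, dist_eq_norm]
          exact lt_of_lt_of_le hpx hρδ
        exact hWsub hxm
      have hFne : F x ≠ ∅ := Set.nonempty_iff_ne_empty.1 ⟨y, hxg⟩
      rw [if_neg hFne, equot, if_neg (by rw [← hddef]; exact hd0.ne'), ← EReal.coe_mul,
        EReal.coe_lt_coe_iff] at hgx
      rw [← hddef] at hgx
      have hinfle : infDist ybar (F x) ≤ n := by
        have h1 : infDist ybar (F x) ≤ dist ybar y := Metric.infDist_le_dist_of_mem hxg
        rw [dist_comm, dist_eq_norm] at h1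
        rw [hndef]
        exact h1
      have hpow : infDist ybar (F x) ^ qq ≤ n ^ qq :=
        Real.rpow_le_rpow Metric.infDist_nonneg hinfle hq0.le
      have hcd : c * d < n ^ qq := by
        have h1 : c < infDist ybar (F x) ^ qq * d⁻¹ := hgx
        have h2 : c * d < infDist ybar (F x) ^ qq := by
          rw [← div_eq_mul_inv] at h1
          exact (lt_div_iff₀ hd0).1 h1
        linarith
      have hq : a * n = n ^ qq := by
        have h := Real.rpow_add hn (qq - 1) 1
        rw [Real.rpow_one] at h
        rw [hadef, ← h]
        ring_nf
      -- conclude c' < a * ‖xs‖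
      have hfin : c' < a * ‖xs‖ := by
        have h1 : c' * d < (1 - ε) * (n ^ qq) := by
          rw [← hε1]
          calc (1 - ε) * c * d = (1 - ε) * (c * d) := by ring
            _ < (1 - ε) * (n ^ qq) := by
                exact mul_lt_mul_of_pos_left hcd hε1'
        have h2 : (1 - ε) * (n ^ qq) ≤ a * ‖xs‖ * d := by
          calc (1 - ε) * (n ^ qq) = a * ((1 - ε) * n) := by rw [← hq]; ring
            _ ≤ a * (‖xs‖ * d) := mul_le_mul_of_nonneg_left hxd ha.le
            _ = a * ‖xs‖ * d := by ring
        have h3 : c' * d < a * ‖xs‖ * d := lt_of_lt_of_le h1 h2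
        exact lt_of_mul_lt_mul_right (by linarith) hd0.le
      rw [div_le_iff₀ ha]
      nlinarith
    -- combine: c' ≤ a * FsdSlope
    calc (c' : EReal) = ((a * (c' / a) : ℝ) : EReal) := by
          rw [mul_div_cancel₀ _ ha.ne']
      _ = ((a : ℝ) : EReal) * ((c' / a : ℝ) : EReal) := EReal.coe_mul _ _
      _ ≤ ((a : ℝ) : EReal) * FsdSlope F ybar (xiq qq ybar y * ρ) (x, y) :=
          mul_le_mul_of_nonneg_left hI (by exact_mod_cast ha.le)
  -- conclude srq ≤ S
  have hmain : srq F xbar ybar qq ≤ S := by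
    by_contra hlt
    push_neg at hlt
    obtain ⟨c, hSc, hcsr⟩ := EReal.exists_between_coe_real hlt
    obtain ⟨c', hSc', hc'c⟩ := EReal.exists_between_coe_real hSc
    have hc'0 : (0:ℝ) < c' := by
      have h1 : ((0:ℝ) : EReal) < (c' : EReal) := by
        rw [EReal.coe_zero]
        exact lt_of_le_of_lt hS0 hSc'
      exact_mod_cast h1
    have := key c c' hc'0 (by exact_mod_cast hc'c) hcsr
    exact absurd (lt_of_le_of_lt this hSc') (lt_irrefl _)
  exact mul_le_mul_of_nonneg_left hmain (by exact_mod_cast hq0.le)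


end HolderPaper
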